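/- Let r ≥ 2 and let a₁, …, a_r be integers with aᵢ ≥ 2 for all i. In the polynomial ring ℂ[x₁,…,x_r], let I be the ideal generated by the monomials xᵢxⱼ for 1 ≤ i < j ≤ r together with the binomials aᵢxᵢ^{aᵢ} − aⱼxⱼ^{aⱼ} for 1 ≤ i < j ≤ r. Then the quotient ℂ-algebra A := ℂ[x₁,…,x_r]/I is finite-dimensional over ℂ of dimension 2 + Σᵢ₌₁^r (aᵢ − 1), and the residue classes of the elements 1, xᵢ^j (for 1 ≤ i ≤ r, 1 ≤ j ≤ aᵢ − 1) and a₁x₁^{a₁} form a ℂ-basis of A. In particular, in A one has xᵢ^{aᵢ+1} = 0 for every i. -/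

import Mathlib

open MvPolynomial

noncomputable section

def cuspIdeal (r : ℕ) (a : Fin r → ℕ) : Ideal (MvPolynomial (Fin r) ℂ) :=
  Ideal.span
    ({p | ∃ i j : Fin r, i < j ∧ p = X i * X j} ∪
     {p | ∃ i j : Fin r, i < j ∧
        p = C ((a i : ℕ) : ℂ) * X i ^ a i - C ((a j : ℕ) : ℂ) * X j ^ a j})

variable {r : ℕ} {a : Fin r → ℕ}

abbrev cuspIndex (r : ℕ) (a : Fin r → ℕ) :=
  Unit ⊕ ((Σ i : Fin r, Fin (a i - 1)) ⊕ Unit)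

def phiAux (r : ℕ) (a : Fin r → ℕ) (p : MvPolynomial (Fin r) ℂ) : cuspIndex r a → ℂ
  | Sum.inl _ => coeff 0 p
  | Sum.inr (Sum.inl ⟨i, j⟩) => coeff (Finsupp.single i ((j : ℕ) + 1)) p
  | Sum.inr (Sum.inr _) => ∑ i, ((a i : ℂ))⁻¹ * coeff (Finsupp.single i (a i)) p

def phi (r : ℕ) (a : Fin r → ℕ) :
    MvPolynomial (Fin r) ℂ →ₗ[ℂ] (cuspIndex r a → ℂ) where
  toFun := phiAux r a
  map_add' p q := by
    funext b
    rcases b with _ | (⟨i, j⟩ | _) <;>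
      simp [phiAux, coeff_add, Finset.sum_add_distrib, mul_add]
  map_smul' c p := by
    funext b
    rcases b with _ | (⟨i, j⟩ | _) <;>
      simp [phiAux, coeff_smul, Finset.mul_sum, smul_eq_mul, mul_left_comm]

lemma XX_mem (i j : Fin r) (h : i ≠ j) : X i * X j ∈ cuspIdeal r a := by
  rcases lt_or_gt_of_ne h with h' | h'
  · exact Ideal.subset_span (Or.inl ⟨i, j, h', rfl⟩)
  · rw [mul_comm]
    exact Ideal.subset_span (Or.inl ⟨j, i, h', rfl⟩)

lemma binom_mem (i j : Fin r) :
    C ((a i : ℕ) : ℂ) * X i ^ a i - C ((a j : ℕ) : ℂ) * X j ^ a j ∈ cuspIdeal r a := by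
  rcases lt_trichotomy i j with h' | h' | h'
  · exact Ideal.subset_span (Or.inr ⟨i, j, h', rfl⟩)
  · subst h'; simp
  · have := Ideal.subset_span (s :=
      ({p | ∃ i j : Fin r, i < j ∧ p = X i * X j} ∪
       {p | ∃ i j : Fin r, i < j ∧
          p = C ((a i : ℕ) : ℂ) * X i ^ a i - C ((a j : ℕ) : ℂ) * X j ^ a j}))
      (Or.inr ⟨j, i, h', rfl⟩)
    have h2 := (cuspIdeal r a).neg_mem this
    rw [neg_sub] at h2
    exact h2

lemma CXpow_mem (hr : 2 ≤ r) (ha : ∀ i, 2 ≤ a i) (i : Fin r) :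
    C ((a i : ℕ) : ℂ) * X i ^ (a i + 1) ∈ cuspIdeal r a := by
  obtain ⟨j, hj⟩ : ∃ j : Fin r, j ≠ i := by
    rcases Nat.lt_or_ge (i : ℕ) 1 with h | h
    · exact ⟨⟨1, by omega⟩, by simp [Fin.ext_iff]; omega⟩
    · exact ⟨⟨0, by omega⟩, by simp [Fin.ext_iff]; omega⟩
  have key : C ((a i : ℕ) : ℂ) * X i ^ (a i + 1) =
      X i * (C ((a i : ℕ) : ℂ) * X i ^ a i - C ((a j : ℕ) : ℂ) * X j ^ a j)
      + (C ((a j : ℕ) : ℂ) * X j ^ (a j - 1)) * (X i * X j) := by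
    have : (X j : MvPolynomial (Fin r) ℂ) ^ (a j - 1) * X j = X j ^ a j := by
      rw [← pow_succ]
      congr 1
      have := ha j; omega
    rw [← this]; ring
  rw [key]
  exact (cuspIdeal r a).add_mem
    (Ideal.mul_mem_left _ _ (binom_mem i j))
    (Ideal.mul_mem_left _ _ (XX_mem i j (Ne.symm hj)))

lemma Xpow_mem (hr : 2 ≤ r) (ha : ∀ i, 2 ≤ a i) (i : Fin r) :
    X i ^ (a i + 1) ∈ cuspIdeal r a := by
  have hne : ((a i : ℕ) : ℂ) ≠ 0 := Nat.cast_ne_zero.mpr (by have := ha i; omega)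
  have := Ideal.mul_mem_left (cuspIdeal r a) (C (((a i : ℕ) : ℂ))⁻¹) (CXpow_mem hr ha i)
  rwa [← mul_assoc, ← C_mul, inv_mul_cancel₀ hne, C_1, one_mul] at this

lemma coeff_mul_X_eq_zero (m : Fin r →₀ ℕ) (j : Fin r) (h : m j = 0)
    (p : MvPolynomial (Fin r) ℂ) : coeff m (p * X j) = 0 := by
  rw [coeff_mul_X']
  simp [Finsupp.mem_support_iff, h]

lemma coeff_single_mul_XX (p : MvPolynomial (Fin r) ℂ) (i j k : Fin r) (hij : i ≠ j)
    (c : ℕ) : coeff (Finsupp.single k c) (p * (X i * X j)) = 0 := by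
  rw [← mul_assoc]
  by_cases hj : (Finsupp.single k c) j = 0
  · exact coeff_mul_X_eq_zero _ _ hj _
  · have hk : k = j := by
      by_contra h
      rw [Finsupp.single_apply_eq_zero] at hj
      exact hj fun hh => absurd hh.symm h
    subst hk
    rw [coeff_mul_X', if_pos (Finsupp.mem_support_iff.mpr hj)]
    apply coeff_mul_X_eq_zero
    rw [Finsupp.tsub_apply, Finsupp.single_apply, Finsupp.single_apply,
      if_neg (fun h => hij h.symm), if_neg (fun h => hij h.symm)]
    rfl

lemma coeff_single_mul_CXpow (p : MvPolynomial (Fin r) ℂ) (i k : Fin r) (n c : ℕ)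
    (hn : n ≠ 0) (h : ¬ (k = i ∧ n ≤ c)) (d : ℂ) :
    coeff (Finsupp.single k c) (p * (C d * X i ^ n)) = 0 := by
  rw [C_mul_X_pow_eq_monomial, coeff_mul_monomial', if_neg]
  intro hle
  rw [Finsupp.single_le_iff, Finsupp.single_apply] at hle
  by_cases hk : k = i
  · subst hk; rw [if_pos rfl] at hle; exact h ⟨rfl, hle⟩
  · rw [if_neg hk] at hle
    omega

lemma coeff_single_mul_CXpow_self (p : MvPolynomial (Fin r) ℂ) (i : Fin r) (n : ℕ) (d : ℂ) :
    coeff (Finsupp.single i n) (p * (C d * X i ^ n)) = coeff 0 p * d := by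
  rw [C_mul_X_pow_eq_monomial, coeff_mul_monomial', if_pos le_rfl, tsub_self]

lemma phi_apply (p : MvPolynomial (Fin r) ℂ) (b : cuspIndex r a) :
    phi r a p b = phiAux r a p b := rfl

lemma phi_vanish (ha : ∀ i, 2 ≤ a i) (q : MvPolynomial (Fin r) ℂ)
    (hq : q ∈ cuspIdeal r a) : phi r a q = 0 := by
  have H : ∀ q ∈ cuspIdeal r a, ∀ p, phi r a (p * q) = 0 := by
    intro q hq
    refine Submodule.span_induction ?_ ?_ ?_ ?_ hq
    · rintro g (⟨i, j, hij, rfl⟩ | ⟨i, j, hij, rfl⟩) p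
      · funext b
        rcases b with _ | (⟨k, j'⟩ | _)
        · rw [phi_apply]
          show coeff 0 _ = 0
          rw [show (0 : Fin r →₀ ℕ) = Finsupp.single i 0 by simp]
          exact coeff_single_mul_XX p i j i hij.ne 0
        · rw [phi_apply]
          exact coeff_single_mul_XX p i j k hij.ne _
        · rw [phi_apply]
          show ∑ k, _ = (0 : ℂ)
          apply Finset.sum_eq_zero
          intro k _
          rw [coeff_single_mul_XX p i j k hij.ne, mul_zero]
      · have hai : ((a i : ℕ) : ℂ) ≠ 0 := Nat.cast_ne_zero.mpr (by have := ha i; omega)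
        have haj : ((a j : ℕ) : ℂ) ≠ 0 := Nat.cast_ne_zero.mpr (by have := ha j; omega)
        funext b
        rw [mul_sub]
        rcases b with _ | (⟨k, j'⟩ | _)
        · rw [phi_apply]
          show coeff 0 _ = 0
          rw [coeff_sub,
            show (0 : Fin r →₀ ℕ) = Finsupp.single i 0 by simp,
            coeff_single_mul_CXpow p i i (a i) 0 (by have := ha i; omega)
              (by have := ha i; omega),
            show (Finsupp.single i 0 : Fin r →₀ ℕ) = Finsupp.single j 0 by simp,
            coeff_single_mul_CXpow p j j (a j) 0 (by have := ha j; omega)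
              (by have := ha j; omega), sub_zero]
        · rw [phi_apply]
          show coeff _ _ = 0
          have h1 := j'.isLt
          rw [coeff_sub,
            coeff_single_mul_CXpow p i k (a i) ((j' : ℕ) + 1) (by have := ha i; omega)
              (by rintro ⟨rfl, hle⟩; have := ha k; omega),
            coeff_single_mul_CXpow p j k (a j) ((j' : ℕ) + 1) (by have := ha j; omega)
              (by rintro ⟨rfl, hle⟩; have := ha k; omega), sub_zero]
        · rw [phi_apply]
          show ∑ k, _ = (0 : ℂ)
          have key : ∀ (i' : Fin r),
              (∑ k, ((a k : ℕ) : ℂ)⁻¹ * coeff (Finsupp.single k (a k))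
                (p * (C ((a i' : ℕ) : ℂ) * X i' ^ a i'))) = coeff 0 p := by
            intro i'
            have hai' : ((a i' : ℕ) : ℂ) ≠ 0 :=
              Nat.cast_ne_zero.mpr (by have := ha i'; omega)
            rw [Finset.sum_eq_single i']
            · rw [coeff_single_mul_CXpow_self]
              field_simp
            · intro k _ hk
              rw [coeff_single_mul_CXpow p i' k (a i') (a k) (by have := ha i'; omega)
                (by rintro ⟨rfl, hle⟩; exact hk rfl), mul_zero]
            · intro h; exact absurd (Finset.mem_univ i') h
          calc (∑ k, ((a k : ℕ) : ℂ)⁻¹ * coeff (Finsupp.single k (a k))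
                (p * (C ((a i : ℕ) : ℂ) * X i ^ a i) - p * (C ((a j : ℕ) : ℂ) * X j ^ a j)))
              = (∑ k, ((a k : ℕ) : ℂ)⁻¹ * coeff (Finsupp.single k (a k))
                  (p * (C ((a i : ℕ) : ℂ) * X i ^ a i)))
                - (∑ k, ((a k : ℕ) : ℂ)⁻¹ * coeff (Finsupp.single k (a k))
                  (p * (C ((a j : ℕ) : ℂ) * X j ^ a j))) := by
                rw [← Finset.sum_sub_distrib]
                apply Finset.sum_congr rfl
                intro k _
                rw [coeff_sub, mul_sub]
            _ = coeff 0 p - coeff 0 p := by rw [key i, key j]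
            _ = 0 := sub_self _
    · intro p; rw [mul_zero, map_zero]
    · intro x y _ _ ihx ihy p; rw [mul_add, map_add, ihx p, ihy p, add_zero]
    · intro c x _ ih p; rw [smul_eq_mul, ← mul_assoc]; exact ih (p * c)
  simpa using H q hq 1

def cuspBasisFamily (r : ℕ) (hr : 2 ≤ r) (a : Fin r → ℕ) :
    (Unit ⊕ ((Σ i : Fin r, Fin (a i - 1)) ⊕ Unit)) →
      MvPolynomial (Fin r) ℂ ⧸ cuspIdeal r a
  | Sum.inl _ => 1
  | Sum.inr (Sum.inl ⟨i, j⟩) => Ideal.Quotient.mk _ (X i ^ ((j : ℕ) + 1))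
  | Sum.inr (Sum.inr _) =>
      Ideal.Quotient.mk _
        (C ((a ⟨0, by omega⟩ : ℕ) : ℂ) * X (⟨0, by omega⟩ : Fin r) ^ a ⟨0, by omega⟩)

def phiBar (r : ℕ) (a : Fin r → ℕ) (ha : ∀ i, 2 ≤ a i) :
    (MvPolynomial (Fin r) ℂ ⧸ cuspIdeal r a) →ₗ[ℂ] (cuspIndex r a → ℂ) :=
  (Submodule.liftQ ((cuspIdeal r a).restrictScalars ℂ) (phi r a)
      (fun x hx => phi_vanish ha x hx)) ∘ₗ
    (Submodule.Quotient.restrictScalarsEquiv ℂ (cuspIdeal r a)).symm.toLinearMap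

lemma phiBar_mk (ha : ∀ i, 2 ≤ a i) (p : MvPolynomial (Fin r) ℂ) :
    phiBar r a ha (Ideal.Quotient.mk _ p) = phi r a p := by
  show (Submodule.liftQ ((cuspIdeal r a).restrictScalars ℂ) (phi r a)
      (fun x hx => phi_vanish ha x hx))
      ((Submodule.Quotient.restrictScalarsEquiv ℂ (cuspIdeal r a)).symm
        (Submodule.Quotient.mk p)) = phi r a p
  rw [Submodule.Quotient.restrictScalarsEquiv_symm_mk]
  exact Submodule.liftQ_apply _ _ _

lemma single_ne_zero' (k : Fin r) (c : ℕ) (hc : c ≠ 0) :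
    (0 : Fin r →₀ ℕ) ≠ Finsupp.single k c := by
  intro h
  exact hc (Finsupp.single_eq_zero.mp h.symm)

lemma phiBar_family (hr : 2 ≤ r) (ha : ∀ i, 2 ≤ a i) (b : cuspIndex r a) :
    phiBar r a ha (cuspBasisFamily r hr a b) = Pi.single b 1 := by
  classical
  rcases b with _ | (⟨i, j⟩ | _)
  · show phiBar r a ha 1 = _
    rw [show (1 : MvPolynomial (Fin r) ℂ ⧸ cuspIdeal r a) =
      Ideal.Quotient.mk _ (1 : MvPolynomial (Fin r) ℂ) from rfl, phiBar_mk]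
    funext b
    rcases b with _ | (⟨k, j'⟩ | _) <;> rw [phi_apply]
    · show coeff 0 1 = _
      rw [coeff_one, if_pos rfl, Pi.single_apply, if_pos rfl]
    · show coeff _ 1 = _
      rw [coeff_one, if_neg (single_ne_zero' k _ (by omega)),
        Pi.single_apply, if_neg (by simp)]
    · show ∑ k, _ = _
      rw [Pi.single_apply, if_neg (by simp), Finset.sum_eq_zero]
      intro k _
      rw [coeff_one, if_neg (single_ne_zero' k _ (by have := ha k; omega)), mul_zero]
  · rw [show cuspBasisFamily r hr a (Sum.inr (Sum.inl ⟨i, j⟩)) =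
      Ideal.Quotient.mk _ (X i ^ ((j : ℕ) + 1)) from rfl, phiBar_mk]
    have hjlt := j.isLt
    funext b
    rcases b with _ | (⟨k, j'⟩ | _) <;> rw [phi_apply]
    · show coeff 0 _ = _
      rw [X_pow_eq_monomial, coeff_monomial,
        if_neg (fun h => single_ne_zero' i _ (by omega) h.symm),
        Pi.single_apply, if_neg (by simp)]
    · show coeff _ _ = _
      have hj'lt := j'.isLt
      rw [X_pow_eq_monomial, coeff_monomial, Pi.single_apply]
      by_cases hik : i = k
      · subst hik
        by_cases hjj : j = j'
        · subst hjj; rw [if_pos rfl, if_pos rfl]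
        · have hjj' : (j : ℕ) ≠ (j' : ℕ) := fun h => hjj (Fin.ext h)
          rw [if_neg, if_neg]
          · intro hEq
            simp only [Sum.inr.injEq, Sum.inl.injEq] at hEq
            have h2 := (Sigma.mk.inj_iff.mp hEq).2
            exact hjj (eq_of_heq h2).symm
          · intro hEq
            rcases (Finsupp.single_eq_single_iff _ _ _ _).mp hEq with ⟨_, h2⟩ | ⟨h1, _⟩
            · omega
            · omega
      · rw [if_neg, if_neg]
        · intro hEq
          simp only [Sum.inr.injEq, Sum.inl.injEq] at hEq
          exact hik (Sigma.mk.inj_iff.mp hEq).1.symm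
        · intro hEq
          rcases (Finsupp.single_eq_single_iff _ _ _ _).mp hEq with ⟨h1, _⟩ | ⟨h1, _⟩
          · exact hik h1
          · omega
    · show ∑ k, _ = _
      rw [Pi.single_apply, if_neg (by simp), Finset.sum_eq_zero]
      intro k _
      rw [X_pow_eq_monomial, coeff_monomial, if_neg, mul_zero]
      intro hEq
      have := ha k
      rcases (Finsupp.single_eq_single_iff _ _ _ _).mp hEq with ⟨rfl, h2⟩ | ⟨h1, _⟩ <;> omega
  · rw [show cuspBasisFamily r hr a (Sum.inr (Sum.inr ())) =
      Ideal.Quotient.mk _ (C ((a ⟨0, by omega⟩ : ℕ) : ℂ) *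
        X (⟨0, by omega⟩ : Fin r) ^ a ⟨0, by omega⟩) from rfl, phiBar_mk]
    set i0 : Fin r := ⟨0, by omega⟩ with hi0
    funext b
    rcases b with _ | (⟨k, j'⟩ | _) <;> rw [phi_apply]
    · show coeff 0 _ = _
      rw [C_mul_X_pow_eq_monomial, coeff_monomial,
        if_neg (fun h => single_ne_zero' i0 _ (by have := ha i0; omega) h.symm),
        Pi.single_apply, if_neg (by simp)]
    · show coeff _ _ = _
      have hj'lt := j'.isLt
      rw [C_mul_X_pow_eq_monomial, coeff_monomial, if_neg, Pi.single_apply,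
        if_neg (by simp)]
      intro hEq
      have := ha i0
      rcases (Finsupp.single_eq_single_iff _ _ _ _).mp hEq with ⟨rfl, h2⟩ | ⟨h1, _⟩ <;> omega
    · show ∑ k, _ = _
      rw [Pi.single_apply, if_pos rfl, Finset.sum_eq_single i0]
      · rw [C_mul_X_pow_eq_monomial, coeff_monomial, if_pos rfl,
          inv_mul_cancel₀ (Nat.cast_ne_zero.mpr (by have := ha i0; omega))]
      · intro k _ hk
        rw [C_mul_X_pow_eq_monomial, coeff_monomial, if_neg, mul_zero]
        intro hEq
        have := ha k; have := ha i0
        rcases (Finsupp.single_eq_single_iff _ _ _ _).mp hEq with ⟨h1, _⟩ | ⟨h1, _⟩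
        · exact hk h1.symm
        · omega
      · intro h; exact absurd (Finset.mem_univ i0) h

lemma mk_smul' (c : ℂ) (q : MvPolynomial (Fin r) ℂ) :
    Ideal.Quotient.mk (cuspIdeal r a) (c • q) =
      c • Ideal.Quotient.mk (cuspIdeal r a) q := rfl

lemma mk_monomial_mem (hr : 2 ≤ r) (ha : ∀ i, 2 ≤ a i) (m : Fin r →₀ ℕ) :
    Ideal.Quotient.mk (cuspIdeal r a) (monomial m (1 : ℂ)) ∈
      Submodule.span ℂ (Set.range (cuspBasisFamily r hr a)) := by
  by_cases hm0 : m = 0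
  · subst hm0
    have : (monomial (0 : Fin r →₀ ℕ) (1 : ℂ)) = 1 := by
      rw [monomial_zero']; exact C_1
    rw [this, map_one]
    exact Submodule.subset_span ⟨Sum.inl (), rfl⟩
  · obtain ⟨i, hi⟩ : ∃ i, m i ≠ 0 := by
      by_contra h
      push_neg at h
      exact hm0 (Finsupp.ext fun k => h k)
    by_cases h2 : ∃ j, j ≠ i ∧ m j ≠ 0
    · obtain ⟨j, hji, hj⟩ := h2
      have hle : Finsupp.single i 1 + Finsupp.single j 1 ≤ m := by
        intro k
        rw [Finsupp.add_apply, Finsupp.single_apply, Finsupp.single_apply]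
        by_cases hki : i = k
        · subst hki
          rw [if_pos rfl, if_neg hji]
          omega
        · rw [if_neg hki]
          by_cases hkj : j = k
          · subst hkj; rw [if_pos rfl]; omega
          · rw [if_neg hkj]; omega
      have hmem : (monomial m (1 : ℂ)) ∈ cuspIdeal r a := by
        have heq : monomial m (1 : ℂ) =
            monomial (m - (Finsupp.single i 1 + Finsupp.single j 1)) 1 * (X i * X j) := by
          rw [show (X i * X j : MvPolynomial (Fin r) ℂ) =
            monomial (Finsupp.single i 1 + Finsupp.single j 1) 1 by
              rw [X, X, monomial_mul, mul_one],
            monomial_mul, mul_one, tsub_add_cancel_of_le hle]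
        rw [heq]
        exact Ideal.mul_mem_left _ _ (XX_mem i j (Ne.symm hji))
      rw [Ideal.Quotient.eq_zero_iff_mem.mpr hmem]
      exact Submodule.zero_mem _
    · push_neg at h2
      have hms : m = Finsupp.single i (m i) := by
        ext k
        rw [Finsupp.single_apply]
        by_cases hki : i = k
        · subst hki; rw [if_pos rfl]
        · rw [if_neg hki]
          exact h2 k (fun h => hki h.symm)
      set c := m i with hc
      rcases Nat.lt_trichotomy c (a i) with hlt | heqc | hgt
      · -- c ≤ a i - 1
        have hc1 : 1 ≤ c := Nat.one_le_iff_ne_zero.mpr hi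
        have : Ideal.Quotient.mk (cuspIdeal r a) (monomial m (1 : ℂ)) =
            cuspBasisFamily r hr a (Sum.inr (Sum.inl ⟨i, ⟨c - 1, by omega⟩⟩)) := by
          show _ = Ideal.Quotient.mk _ (X i ^ ((c - 1) + 1))
          rw [show c - 1 + 1 = c from by omega, hms, ← X_pow_eq_monomial]
        rw [this]
        exact Submodule.subset_span ⟨_, rfl⟩
      · -- c = a i
        have h1 : Ideal.Quotient.mk (cuspIdeal r a)
            (C ((a i : ℕ) : ℂ) * X i ^ a i) = cuspBasisFamily r hr a (Sum.inr (Sum.inr ())) := by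
          show _ = Ideal.Quotient.mk _ _
          rw [Ideal.Quotient.mk_eq_mk_iff_sub_mem]
          exact binom_mem i ⟨0, by omega⟩
        have h3 : Ideal.Quotient.mk (cuspIdeal r a) (monomial m (1 : ℂ)) =
            ((a i : ℕ) : ℂ)⁻¹ • cuspBasisFamily r hr a (Sum.inr (Sum.inr ())) := by
          rw [← h1, ← mk_smul']
          congr 1
          rw [hms, heqc, smul_eq_C_mul, ← mul_assoc, ← C_mul,
            inv_mul_cancel₀ (Nat.cast_ne_zero.mpr (by have := ha i; omega)), C_1, one_mul,
            X_pow_eq_monomial]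
        rw [h3]
        exact Submodule.smul_mem _ _ (Submodule.subset_span ⟨_, rfl⟩)
      · -- c > a i
        have hmem : (monomial m (1 : ℂ)) ∈ cuspIdeal r a := by
          have heq : monomial m (1 : ℂ) = X i ^ (c - (a i + 1)) * X i ^ (a i + 1) := by
            rw [← pow_add, show c - (a i + 1) + (a i + 1) = c from by omega, hms,
              X_pow_eq_monomial]
          rw [heq]
          exact Ideal.mul_mem_left _ _ (Xpow_mem hr ha i)
        rw [Ideal.Quotient.eq_zero_iff_mem.mpr hmem]
        exact Submodule.zero_mem _

lemma family_li (hr : 2 ≤ r) (ha : ∀ i, 2 ≤ a i) :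
    LinearIndependent ℂ (cuspBasisFamily r hr a) := by
  classical
  apply LinearIndependent.of_comp (phiBar r a ha)
  have heq : (phiBar r a ha ∘ cuspBasisFamily r hr a) =
      fun b : cuspIndex r a => (Pi.single b 1 : cuspIndex r a → ℂ) :=
    funext fun b => phiBar_family hr ha b
  rw [heq]
  have h2 : ⇑(Pi.basisFun ℂ (cuspIndex r a)) =
      fun b : cuspIndex r a => (Pi.single b 1 : cuspIndex r a → ℂ) :=
    funext fun b => by simp
  rw [← h2]
  exact (Pi.basisFun ℂ (cuspIndex r a)).linearIndependent

lemma family_span (hr : 2 ≤ r) (ha : ∀ i, 2 ≤ a i) :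
    Submodule.span ℂ (Set.range (cuspBasisFamily r hr a)) = ⊤ := by
  rw [eq_top_iff]
  rintro x -
  obtain ⟨p, rfl⟩ := Ideal.Quotient.mk_surjective x
  rw [← support_sum_monomial_coeff p, map_sum]
  apply Submodule.sum_mem
  intro m _
  have : (monomial m (coeff m p) : MvPolynomial (Fin r) ℂ) =
      (coeff m p) • monomial m 1 := by
    rw [smul_monomial, smul_eq_mul, mul_one]
  rw [this, mk_smul']
  exact Submodule.smul_mem _ _ (mk_monomial_mem hr ha m)

theorem cusp_limit_algebra (r : ℕ) (hr : 2 ≤ r) (a : Fin r → ℕ) (ha : ∀ i, 2 ≤ a i) :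
    FiniteDimensional ℂ (MvPolynomial (Fin r) ℂ ⧸ cuspIdeal r a) ∧
    Module.finrank ℂ (MvPolynomial (Fin r) ℂ ⧸ cuspIdeal r a) = 2 + ∑ i, (a i - 1) ∧
    LinearIndependent ℂ (cuspBasisFamily r hr a) ∧
    Submodule.span ℂ (Set.range (cuspBasisFamily r hr a)) = ⊤ ∧
    ∀ i : Fin r, Ideal.Quotient.mk (cuspIdeal r a) (X i ^ (a i + 1)) = 0 := by
  have hli := family_li hr ha
  have hsp := family_span hr ha
  have B : Module.Basis (cuspIndex r a) ℂ (MvPolynomial (Fin r) ℂ ⧸ cuspIdeal r a) :=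
    Module.Basis.mk hli (le_of_eq hsp.symm)
  have hfd : FiniteDimensional ℂ (MvPolynomial (Fin r) ℂ ⧸ cuspIdeal r a) :=
    Module.Finite.of_basis B
  refine ⟨hfd, ?_, hli, hsp, ?_⟩
  · rw [Module.finrank_eq_card_basis B]
    simp only [Fintype.card_sum, Fintype.card_sigma, Fintype.card_fin, Fintype.card_unit]
    omega
  · intro i
    exact Ideal.Quotient.eq_zero_iff_mem.mpr (Xpow_mem hr ha i)
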